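/- Let 0 ≤ δ < 1/4 and let (H₁, H₂, H₃) be a δ-representation of the sphere by n×n complex matrices. Then |bott(H₁,H₂,H₃) − (3/(2i))·Tr(H₁(H₂H₃ − H₃H₂))| ≤ 32 n δ², where the quantity (3/(2i))·Tr(H₁(H₂H₃ − H₃H₂)) is a real number. Consequently, if in addition nδ² < 1/64, then bott(H₁,H₂,H₃) is the unique integer at distance less than 1/2 from (3/(2i))·Tr(H₁(H₂H₃ − H₃H₂)). -/

import Mathlib

open Matrix

noncomputable section

namespace AC

variable {m : Type*} [Fintype m] [DecidableEq m]

/-- The ℓ² operator norm of a complex matrix. -/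
def opNorm (A : Matrix m m ℂ) : ℝ :=
  ‖Matrix.toEuclideanCLM (𝕜 := ℂ) A‖

/-- `(H₁, H₂, H₃)` is a δ-representation of the sphere: each `Hᵣ` is Hermitian, all
commutators have ℓ²-operator norm at most `δ`, and `‖H₁² + H₂² + H₃² − I‖ ≤ δ`. -/
def IsSphereRep (δ : ℝ) (H₁ H₂ H₃ : Matrix m m ℂ) : Prop :=
  H₁.IsHermitian ∧ H₂.IsHermitian ∧ H₃.IsHermitian ∧
  opNorm (H₁ * H₂ - H₂ * H₁) ≤ δ ∧
  opNorm (H₁ * H₃ - H₃ * H₁) ≤ δ ∧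
  opNorm (H₂ * H₃ - H₃ * H₂) ≤ δ ∧
  opNorm (H₁ ^ 2 + H₂ ^ 2 + H₃ ^ 2 - 1) ≤ δ

/-- The 2n×2n Hermitian block matrix `S(H₁,H₂,H₃) = [[H₃, H₁ − iH₂], [H₁ + iH₂, −H₃]]`. -/
def sphS (H₁ H₂ H₃ : Matrix m m ℂ) : Matrix (m ⊕ m) (m ⊕ m) ℂ :=
  Matrix.fromBlocks H₃ (H₁ - Complex.I • H₂) (H₁ + Complex.I • H₂) (-H₃)

open Classical in
/-- The Bott index: the number of positive eigenvalues (with multiplicity) of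
`S(H₁,H₂,H₃)` minus `n`.  (Junk value `0` if `S(H₁,H₂,H₃)` is not Hermitian.) -/
def bott (H₁ H₂ H₃ : Matrix m m ℂ) : ℤ :=
  if h : (sphS H₁ H₂ H₃).IsHermitian then
    ((Finset.univ.filter fun i => 0 < h.eigenvalues i).card : ℤ) - Fintype.card m
  else 0

end AC

section Aux

open scoped Matrix.Norms.L2Operator
set_option linter.unusedSectionVars false

variable {m : Type*} [Fintype m] [DecidableEq m]

lemma AC.trace_fromBlocks' (A B C D : Matrix m m ℂ) :
    (fromBlocks A B C D).trace = A.trace + D.trace := by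
  simp [Matrix.trace, Fintype.sum_sum_type, fromBlocks]

lemma AC.sq_norm_sum (v : (m ⊕ m) → ℂ) :
    ‖(WithLp.equiv 2 ((m ⊕ m) → ℂ)).symm v‖ ^ 2 =
      ‖(WithLp.equiv 2 (m → ℂ)).symm (v ∘ Sum.inl)‖ ^ 2 +
      ‖(WithLp.equiv 2 (m → ℂ)).symm (v ∘ Sum.inr)‖ ^ 2 := by
  rw [PiLp.norm_sq_eq_of_L2, PiLp.norm_sq_eq_of_L2, PiLp.norm_sq_eq_of_L2,
    Fintype.sum_sum_type]
  rfl

lemma AC.opNorm_fromBlocks_le {X Y Z W : Matrix m m ℂ} {c d : ℝ}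
    (hX : ‖X‖ ≤ c) (hY : ‖Y‖ ≤ d) (hZ : ‖Z‖ ≤ d) (hW : ‖W‖ ≤ c) :
    ‖(fromBlocks X Y Z W : Matrix (m ⊕ m) (m ⊕ m) ℂ)‖ ≤ c + d := by
  have hc : (0:ℝ) ≤ c := (norm_nonneg X).trans hX
  have hd : (0:ℝ) ≤ d := (norm_nonneg Y).trans hY
  rw [Matrix.cstar_norm_def]
  refine ContinuousLinearMap.opNorm_le_bound _ (by positivity) fun x => ?_
  set x' : (m ⊕ m) → ℂ := WithLp.equiv 2 _ x with hx'
  have hxx : x = (WithLp.equiv 2 _).symm x' := rfl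
  set a : EuclideanSpace ℂ m := (WithLp.equiv 2 (m → ℂ)).symm (x' ∘ Sum.inl) with ha
  set b : EuclideanSpace ℂ m := (WithLp.equiv 2 (m → ℂ)).symm (x' ∘ Sum.inr) with hb
  have happ : toEuclideanCLM (𝕜 := ℂ) (fromBlocks X Y Z W) x =
      (WithLp.equiv 2 _).symm (fromBlocks X Y Z W *ᵥ x') := by
    rw [hxx]
    rfl
  have hmv : fromBlocks X Y Z W *ᵥ x' =
      Sum.elim (X *ᵥ (x' ∘ Sum.inl) + Y *ᵥ (x' ∘ Sum.inr))
        (Z *ᵥ (x' ∘ Sum.inl) + W *ᵥ (x' ∘ Sum.inr)) := by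
    conv_lhs => rw [← Sum.elim_comp_inl_inr x', fromBlocks_mulVec]
    simp [Sum.elim_comp_inl, Sum.elim_comp_inr]
  have hsq : ‖toEuclideanCLM (𝕜 := ℂ) (fromBlocks X Y Z W) x‖ ^ 2 =
      ‖(WithLp.equiv 2 (m → ℂ)).symm (X *ᵥ (x' ∘ Sum.inl) + Y *ᵥ (x' ∘ Sum.inr))‖ ^ 2 +
      ‖(WithLp.equiv 2 (m → ℂ)).symm (Z *ᵥ (x' ∘ Sum.inl) + W *ᵥ (x' ∘ Sum.inr))‖ ^ 2 := by
    rw [happ, hmv, AC.sq_norm_sum]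
    rfl
  have hx2 : ‖x‖ ^ 2 = ‖a‖ ^ 2 + ‖b‖ ^ 2 := by
    rw [hxx, AC.sq_norm_sum]
  have hann := norm_nonneg a
  have hbnn := norm_nonneg b
  have hP : ‖(WithLp.equiv 2 (m → ℂ)).symm (X *ᵥ (x' ∘ Sum.inl) + Y *ᵥ (x' ∘ Sum.inr))‖ ≤
      c * ‖a‖ + d * ‖b‖ := by
    have h1 : (WithLp.equiv 2 (m → ℂ)).symm (X *ᵥ (x' ∘ Sum.inl) + Y *ᵥ (x' ∘ Sum.inr)) =
        (WithLp.equiv 2 (m → ℂ)).symm (X *ᵥ (x' ∘ Sum.inl)) +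
        (WithLp.equiv 2 (m → ℂ)).symm (Y *ᵥ (x' ∘ Sum.inr)) := rfl
    rw [h1]
    refine (norm_add_le _ _).trans (add_le_add ?_ ?_)
    · exact (X.l2_opNorm_mulVec a).trans (mul_le_mul_of_nonneg_right hX hann)
    · exact (Y.l2_opNorm_mulVec b).trans (mul_le_mul_of_nonneg_right hY hbnn)
  have hQ : ‖(WithLp.equiv 2 (m → ℂ)).symm (Z *ᵥ (x' ∘ Sum.inl) + W *ᵥ (x' ∘ Sum.inr))‖ ≤
      d * ‖a‖ + c * ‖b‖ := by
    have h1 : (WithLp.equiv 2 (m → ℂ)).symm (Z *ᵥ (x' ∘ Sum.inl) + W *ᵥ (x' ∘ Sum.inr)) =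
        (WithLp.equiv 2 (m → ℂ)).symm (Z *ᵥ (x' ∘ Sum.inl)) +
        (WithLp.equiv 2 (m → ℂ)).symm (W *ᵥ (x' ∘ Sum.inr)) := rfl
    rw [h1]
    refine (norm_add_le _ _).trans (add_le_add ?_ ?_)
    · exact (Z.l2_opNorm_mulVec a).trans (mul_le_mul_of_nonneg_right hZ hann)
    · exact (W.l2_opNorm_mulVec b).trans (mul_le_mul_of_nonneg_right hW hbnn)
  have hPnn := norm_nonneg
    ((WithLp.equiv 2 (m → ℂ)).symm (X *ᵥ (x' ∘ Sum.inl) + Y *ᵥ (x' ∘ Sum.inr)))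
  have hQnn := norm_nonneg
    ((WithLp.equiv 2 (m → ℂ)).symm (Z *ᵥ (x' ∘ Sum.inl) + W *ᵥ (x' ∘ Sum.inr)))
  have hP2 := pow_le_pow_left₀ hPnn hP 2
  have hQ2 := pow_le_pow_left₀ hQnn hQ 2
  have h2 : ‖toEuclideanCLM (𝕜 := ℂ) (fromBlocks X Y Z W) x‖ ^ 2 ≤ ((c + d) * ‖x‖) ^ 2 := by
    rw [hsq, mul_pow, hx2]
    nlinarith [hP2, hQ2, mul_nonneg (mul_nonneg hc hd) (sq_nonneg (‖a‖ - ‖b‖))]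
  exact le_of_pow_le_pow_left₀ (two_ne_zero) (by positivity) h2

lemma AC.sphS_isHermitian {A B C : Matrix m m ℂ} (hA : A.IsHermitian) (hB : B.IsHermitian)
    (hC : C.IsHermitian) : (AC.sphS A B C).IsHermitian := by
  refine Matrix.IsHermitian.fromBlocks hC ?_ hC.neg
  rw [conjTranspose_sub, conjTranspose_smul, hA.eq, hB.eq]
  simp [Complex.star_def, Complex.conj_I, sub_eq_add_neg, neg_smul]

lemma AC.sphS_sq_sub_one (A B C : Matrix m m ℂ) :
    AC.sphS A B C * AC.sphS A B C - 1 =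
      fromBlocks
        ((A ^ 2 + B ^ 2 + C ^ 2 - 1) + Complex.I • (A * B - B * A))
        ((C * A - A * C) - Complex.I • (C * B - B * C))
        (-(C * A - A * C) - Complex.I • (C * B - B * C))
        ((A ^ 2 + B ^ 2 + C ^ 2 - 1) - Complex.I • (A * B - B * A)) := by
  rw [AC.sphS, fromBlocks_multiply, ← fromBlocks_one, sub_eq_add_neg, fromBlocks_neg,
    fromBlocks_add]
  simp only [sub_mul, mul_sub, add_mul, mul_add, neg_mul, mul_neg, smul_mul_assoc,
    mul_smul_comm, smul_smul, Complex.I_mul_I, neg_smul, one_smul, smul_sub, smul_add,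
    smul_neg, neg_neg, sub_eq_add_neg, neg_add, pow_two, Matrix.mul_one, Matrix.one_mul]
  abel

lemma AC.trace_sphS_cube (A B C : Matrix m m ℂ) :
    (AC.sphS A B C * (AC.sphS A B C * AC.sphS A B C)).trace
      = 6 * Complex.I * (A * (B * C - C * B)).trace := by
  simp only [AC.sphS, fromBlocks_multiply, AC.trace_fromBlocks']
  simp only [Matrix.mul_add, Matrix.add_mul, Matrix.mul_sub, Matrix.sub_mul,
    Matrix.neg_mul, Matrix.mul_neg, smul_mul_assoc, mul_smul_comm, smul_smul,
    trace_add, trace_sub, trace_neg, trace_smul, Matrix.mul_assoc,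
    Complex.I_mul_I, neg_neg, neg_smul, one_smul, smul_eq_mul]
  have cyc : ∀ X Y Z : Matrix m m ℂ, (X*(Y*Z)).trace = (Z*(X*Y)).trace := fun X Y Z => by
    rw [← Matrix.mul_assoc, Matrix.trace_mul_cycle, Matrix.mul_assoc]
  have h1 := (cyc C A A).trans (cyc A C A)
  have h2 := cyc C B A
  have h3 := (cyc C A B).trans (cyc B C A)
  have h4 := (cyc C B B).trans (cyc B C B)
  have h5 := cyc A C A
  have h6 := (cyc B A C).trans (cyc C B A)
  have h7 := cyc B C A
  have h8 := cyc B C B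
  simp only [h1, h2, h3, h4, h5, h6, h7, h8]
  ring

lemma AC.trace_pow_eq {k : Type*} [Fintype k] [DecidableEq k]
    {M : Matrix k k ℂ} (hM : M.IsHermitian) (p : ℕ) :
    (M ^ p).trace = ∑ i, ((hM.eigenvalues i : ℂ)) ^ p := by
  have hU := (Matrix.mem_unitaryGroup_iff).mp (hM.eigenvectorUnitary).2
  have hU' := (Matrix.mem_unitaryGroup_iff').mp (hM.eigenvectorUnitary).2
  have hcancel : ∀ X : Matrix k k ℂ, star (hM.eigenvectorUnitary : Matrix k k ℂ) *
      ((hM.eigenvectorUnitary : Matrix k k ℂ) * X) = X := fun X => by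
    rw [← Matrix.mul_assoc, hU', Matrix.one_mul]
  have key : M ^ p = (hM.eigenvectorUnitary : Matrix k k ℂ) *
      (diagonal (RCLike.ofReal ∘ hM.eigenvalues) ^ p) *
      (star (hM.eigenvectorUnitary : Matrix k k ℂ)) := by
    induction p with
    | zero => simp [hU]
    | succ q ih =>
      calc M ^ (q+1) = M ^ q * M := pow_succ _ _
        _ = ((hM.eigenvectorUnitary : Matrix k k ℂ) *
              (diagonal (RCLike.ofReal ∘ hM.eigenvalues) ^ q) *
              (star (hM.eigenvectorUnitary : Matrix k k ℂ))) *
            ((hM.eigenvectorUnitary : Matrix k k ℂ) *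
              (diagonal (RCLike.ofReal ∘ hM.eigenvalues)) *
              (star (hM.eigenvectorUnitary : Matrix k k ℂ))) := by
          rw [← ih]; congr 1; exact hM.spectral_theorem
        _ = (hM.eigenvectorUnitary : Matrix k k ℂ) *
              (diagonal (RCLike.ofReal ∘ hM.eigenvalues) ^ (q+1)) *
              (star (hM.eigenvectorUnitary : Matrix k k ℂ)) := by
          rw [pow_succ]
          simp only [Matrix.mul_assoc, hcancel]
  rw [key, Matrix.trace_mul_cycle, hU', Matrix.one_mul, diagonal_pow, trace_diagonal]
  simp

lemma AC.eigenvalue_sq_sub_one_bound {k : Type*} [Fintype k] [DecidableEq k]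
    {M : Matrix k k ℂ} (hM : M.IsHermitian) {ε : ℝ}
    (hε : ‖M * M - 1‖ ≤ ε) (i : k) : |hM.eigenvalues i ^ 2 - 1| ≤ ε := by
  set μ : ℝ := hM.eigenvalues i
  set v : k → ℂ := ⇑(hM.eigenvectorBasis i) with hv
  have hv0 : v ≠ 0 := by
    have := hM.eigenvectorBasis.orthonormal.ne_zero i
    intro h
    apply this
    ext j
    exact congrFun h j
  have hMv : M *ᵥ v = (μ : ℂ) • v := by
    have h := hM.mulVec_eigenvectorBasis i
    ext j
    have := congrFun h j
    simpa [Complex.real_smul] using this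
  have hmem : ((μ : ℂ) ^ 2 - 1) ∈ spectrum ℂ (M * M - 1) := by
    rw [spectrum.mem_iff]
    intro hu
    rw [Matrix.isUnit_iff_isUnit_det, isUnit_iff_ne_zero] at hu
    apply hu
    rw [← Matrix.exists_mulVec_eq_zero_iff]
    refine ⟨v, hv0, ?_⟩
    have h2 : (M * M) *ᵥ v = ((μ:ℂ)^2) • v := by
      rw [← Matrix.mulVec_mulVec, hMv, Matrix.mulVec_smul, hMv, smul_smul, ← sq]
    rw [sub_mulVec, sub_mulVec, h2, Matrix.one_mulVec, Algebra.algebraMap_eq_smul_one,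
      smul_mulVec, Matrix.one_mulVec]
    module
  have hb := spectrum.norm_le_norm_mul_of_mem hmem
  have h1 : ‖(1 : Matrix k k ℂ)‖ ≤ 1 := by
    have h : toEuclideanCLM (𝕜 := ℂ) (n := k) 1 = ContinuousLinearMap.id ℂ _ := by
      rw [_root_.map_one]; rfl
    show ‖toEuclideanCLM (𝕜 := ℂ) (n := k) 1‖ ≤ 1
    rw [h]; exact ContinuousLinearMap.norm_id_le
  have h2 : ‖((μ : ℂ) ^ 2 - 1)‖ = |μ ^ 2 - 1| := by
    rw [show ((μ : ℂ) ^ 2 - 1) = ((μ ^ 2 - 1 : ℝ) : ℂ) by push_cast; ring, Complex.norm_real]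
    rfl
  calc |μ ^ 2 - 1| = ‖((μ : ℂ) ^ 2 - 1)‖ := h2.symm
    _ ≤ ‖M * M - 1‖ * ‖(1 : Matrix k k ℂ)‖ := hb
    _ ≤ ε * 1 := by
        apply mul_le_mul hε h1 (norm_nonneg _) ((norm_nonneg _).trans hε)
    _ = ε := mul_one ε

lemma AC.key_ineq {δ lam : ℝ} (hδ0 : 0 ≤ δ) (hδ : δ < 1/4) (h : |lam ^ 2 - 1| ≤ 4 * δ) :
    |(if 0 < lam then (1:ℝ) else -1)/2 - (3 * lam - lam ^ 3)/4| ≤ 16 * δ ^ 2 := by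
  rw [abs_le] at h ⊢
  obtain ⟨h1, h2⟩ := h
  have hl2 : lam ^ 2 ≤ 1 + 4 * δ := by linarith
  have hl1 : 1 - 4 * δ ≤ lam ^ 2 := by linarith
  split_ifs with hpos
  · have hlam2 : lam < 3/2 := by nlinarith
    have hfac : (lam - 1)^2 ≤ 16 * δ^2 := by nlinarith [sq_nonneg (lam - 1), sq_nonneg (lam + 1)]
    constructor
    · nlinarith [hfac, sq_nonneg (lam - 1)]
    · nlinarith [hfac, sq_nonneg (lam - 1)]
  · push_neg at hpos
    have hneg : lam < 0 := by
      rcases lt_or_eq_of_le hpos with h' | h'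
      · exact h'
      · exfalso; nlinarith
    have hlam2 : -3/2 < lam := by nlinarith
    have hfac : (lam + 1)^2 ≤ 16 * δ^2 := by nlinarith [sq_nonneg (lam + 1), sq_nonneg (lam - 1)]
    constructor
    · nlinarith [hfac, sq_nonneg (lam + 1)]
    · nlinarith [hfac, sq_nonneg (lam + 1)]

end Aux

/-- Lemma (`chernlemma`): if `(H₁,H₂,H₃)` is a δ-representation of the sphere with
`0 ≤ δ < 1/4`, then the quantity `(3/(2i))·Tr(H₁[H₂,H₃])` is real and
`|bott(H₁,H₂,H₃) − (3/(2i))·Tr(H₁[H₂,H₃])| ≤ 32nδ²`.  Consequently, if moreover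
`nδ² < 1/64`, then `bott(H₁,H₂,H₃)` is the unique integer at distance less than `1/2`
from `(3/(2i))·Tr(H₁[H₂,H₃])`. -/
theorem bott_near_chern {n : ℕ} (δ : ℝ) (hδ0 : 0 ≤ δ) (hδ : δ < 1/4)
    (H₁ H₂ H₃ : Matrix (Fin n) (Fin n) ℂ)
    (hrep : AC.IsSphereRep δ H₁ H₂ H₃) :
    ((3 / (2 * Complex.I)) * (H₁ * (H₂ * H₃ - H₃ * H₂)).trace).im = 0 ∧
    |(AC.bott H₁ H₂ H₃ : ℝ) -
        ((3 / (2 * Complex.I)) * (H₁ * (H₂ * H₃ - H₃ * H₂)).trace).re| ≤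
      32 * n * δ ^ 2 ∧
    ((n : ℝ) * δ ^ 2 < 1/64 →
      (|(AC.bott H₁ H₂ H₃ : ℝ) -
          ((3 / (2 * Complex.I)) * (H₁ * (H₂ * H₃ - H₃ * H₂)).trace).re| < 1/2 ∧
       ∀ k : ℤ,
         |(k : ℝ) - ((3 / (2 * Complex.I)) * (H₁ * (H₂ * H₃ - H₃ * H₂)).trace).re| < 1/2 →
         k = AC.bott H₁ H₂ H₃)) := by
  classical
  open scoped Matrix.Norms.L2Operator in
  obtain ⟨h1, h2, h3, c12, c13, c23, cq⟩ := hrep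
  set M := AC.sphS H₁ H₂ H₃ with hMdef
  have hM : M.IsHermitian := AC.sphS_isHermitian h1 h2 h3
  set lam : (Fin n ⊕ Fin n) → ℝ := hM.eigenvalues with hlamdef
  -- norm bound on M² - 1
  have c12' : ‖H₁ * H₂ - H₂ * H₁‖ ≤ δ := c12
  have c13' : ‖H₁ * H₃ - H₃ * H₁‖ ≤ δ := c13
  have c23' : ‖H₂ * H₃ - H₃ * H₂‖ ≤ δ := c23
  have cq' : ‖H₁ ^ 2 + H₂ ^ 2 + H₃ ^ 2 - 1‖ ≤ δ := cq
  have hbound : ‖M * M - 1‖ ≤ (δ + δ) + (δ + δ) := by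
    rw [hMdef, AC.sphS_sq_sub_one]
    have hsI : ∀ K : Matrix (Fin n) (Fin n) ℂ, ‖Complex.I • K‖ = ‖K‖ := fun K => by
      rw [norm_smul, Complex.norm_I, one_mul]
    refine AC.opNorm_fromBlocks_le ?_ ?_ ?_ ?_
    · refine (norm_add_le _ _).trans ?_
      rw [hsI]
      exact add_le_add cq' c12'
    · refine (norm_sub_le _ _).trans ?_
      rw [hsI, norm_sub_rev, norm_sub_rev (H₃ * H₂)]
      exact add_le_add c13' c23'
    · refine (norm_sub_le _ _).trans ?_
      rw [norm_neg, hsI, norm_sub_rev, norm_sub_rev (H₃ * H₂)]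
      exact add_le_add c13' c23'
    · refine (norm_sub_le _ _).trans ?_
      rw [hsI]
      exact add_le_add cq' c12'
  have hbound4 : ‖M * M - 1‖ ≤ 4 * δ := by linarith
  have hlam : ∀ i, |lam i ^ 2 - 1| ≤ 4 * δ := fun i =>
    AC.eigenvalue_sq_sub_one_bound hM hbound4 i
  -- trace identities
  have htr1 : ((∑ i, lam i : ℝ) : ℂ) = 0 := by
    have h0 : M.trace = 0 := by
      rw [hMdef, AC.sphS, AC.trace_fromBlocks', trace_neg, add_neg_cancel]
    have := AC.trace_pow_eq hM 1
    rw [pow_one, h0] at this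
    push_cast
    simp only [pow_one] at this
    exact this.symm
  have hsum1 : ∑ i, lam i = 0 := by exact_mod_cast htr1
  have htr3 : ((∑ i, lam i ^ 3 : ℝ) : ℂ) = (M ^ 3).trace := by
    rw [AC.trace_pow_eq hM 3]
    push_cast
    rfl
  have hcube : (M ^ 3).trace = 6 * Complex.I * (H₁ * (H₂ * H₃ - H₃ * H₂)).trace := by
    rw [show M ^ 3 = M * (M * M) by rw [pow_succ, pow_two, Matrix.mul_assoc], hMdef]
    exact AC.trace_sphS_cube H₁ H₂ H₃
  set c : ℝ := -(1/4) * ∑ i, lam i ^ 3 with hcdef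
  have hchern : (3 / (2 * Complex.I)) * (H₁ * (H₂ * H₃ - H₃ * H₂)).trace = (c : ℂ) := by
    have hI : (3 : ℂ) / (2 * Complex.I) = -(3/2) * Complex.I := by
      field_simp
      linear_combination (1:ℂ) * Complex.I_sq
    have hX : 6 * Complex.I * (H₁ * (H₂ * H₃ - H₃ * H₂)).trace = ((∑ i, lam i ^ 3 : ℝ) : ℂ) := by
      rw [← hcube, htr3]
    rw [hI, hcdef]
    push_cast at hX ⊢
    linear_combination (-1/4 : ℂ) * hX
  have him : ((3 / (2 * Complex.I)) * (H₁ * (H₂ * H₃ - H₃ * H₂)).trace).im = 0 := by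
    rw [hchern, Complex.ofReal_im]
  have hre : ((3 / (2 * Complex.I)) * (H₁ * (H₂ * H₃ - H₃ * H₂)).trace).re = c := by
    rw [hchern, Complex.ofReal_re]
  -- counting
  set P : ℕ := (Finset.univ.filter fun i => 0 < lam i).card with hPdef
  have hbott : (AC.bott H₁ H₂ H₃ : ℝ) = (P : ℝ) - n := by
    unfold AC.bott
    rw [dif_pos hM]
    push_cast [Fintype.card_fin]
    norm_num
    rw [hPdef]
  set f : (Fin n ⊕ Fin n) → ℝ := fun i => if 0 < lam i then (1:ℝ) else -1 with hfdef
  have hcount : P + (Finset.univ.filter fun i => lam i ≤ 0).card = n + n := by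
    have h := Finset.card_filter_add_card_filter_not
      (s := (Finset.univ : Finset (Fin n ⊕ Fin n))) (p := fun i => 0 < lam i)
    simp only [not_lt] at h
    rw [hPdef, h]
    simp [Fintype.card_sum]
  have hsumf : ∑ i, f i = (P : ℝ) - ((Finset.univ.filter fun i => lam i ≤ 0).card : ℝ) := by
    rw [hfdef, Finset.sum_ite, Finset.sum_const, Finset.sum_const]
    simp [hPdef, not_lt]
    ring
  have hbott2 : (AC.bott H₁ H₂ H₃ : ℝ) = (1/2) * ∑ i, f i := by
    have hc' : (P : ℝ) + ((Finset.univ.filter fun i => lam i ≤ 0).card : ℝ) = n + n := by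
      exact_mod_cast hcount
    rw [hbott]
    linarith [hsumf]
  -- the main estimate
  have hmain : |(AC.bott H₁ H₂ H₃ : ℝ) - c| ≤ 32 * n * δ ^ 2 := by
    have hsplit : (AC.bott H₁ H₂ H₃ : ℝ) - c =
        ∑ i, (f i / 2 - (3 * lam i - lam i ^ 3) / 4) := by
      have hs : ∑ i, (f i / 2 - (3 * lam i - lam i ^ 3) / 4) =
          (∑ i, f i) / 2 - (3 * ∑ i, lam i - ∑ i, lam i ^ 3) / 4 := by
        rw [Finset.sum_sub_distrib, ← Finset.sum_div, ← Finset.sum_div,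
          Finset.sum_sub_distrib, ← Finset.mul_sum]
      rw [hs, hbott2, hcdef, hsum1]
      ring
    rw [hsplit]
    calc |∑ i, (f i / 2 - (3 * lam i - lam i ^ 3) / 4)| ≤
        ∑ i, |f i / 2 - (3 * lam i - lam i ^ 3) / 4| := Finset.abs_sum_le_sum_abs _ _
      _ ≤ ∑ _i : (Fin n ⊕ Fin n), 16 * δ ^ 2 := by
          refine Finset.sum_le_sum fun i _ => ?_
          exact AC.key_ineq hδ0 hδ (hlam i)
      _ = (Fintype.card (Fin n ⊕ Fin n) : ℝ) * (16 * δ ^ 2) := by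
          rw [Finset.sum_const, nsmul_eq_mul]
          rfl
      _ = 32 * n * δ ^ 2 := by
          simp [Fintype.card_sum]
          ring
  rw [hre]
  refine ⟨him, hmain, fun h64 => ?_⟩
  have hlt : |(AC.bott H₁ H₂ H₃ : ℝ) - c| < 1/2 := by
    refine hmain.trans_lt ?_
    nlinarith
  refine ⟨hlt, fun k hk => ?_⟩
  have hdist : |(k : ℝ) - (AC.bott H₁ H₂ H₃ : ℝ)| < 1 := by
    calc |(k : ℝ) - (AC.bott H₁ H₂ H₃ : ℝ)|
        = |((k : ℝ) - c) - ((AC.bott H₁ H₂ H₃ : ℝ) - c)| := by ring_nf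
      _ ≤ |(k : ℝ) - c| + |(AC.bott H₁ H₂ H₃ : ℝ) - c| := abs_sub _ _
      _ < 1/2 + 1/2 := add_lt_add hk hlt
      _ = 1 := by norm_num
  have : |k - AC.bott H₁ H₂ H₃| < 1 := by
    have : |((k - AC.bott H₁ H₂ H₃ : ℤ) : ℝ)| < 1 := by push_cast; exact hdist
    exact_mod_cast this
  have := Int.abs_lt_one_iff.mp this
  linarith [this]
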